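/- For every real ξ ≠ 0 and every Schwartz function φ : ℝ → ℂ, the function x ↦ ∫_ℝ e^{i(x−y)²/(4ξ)} φ(y) dy belongs to L²(ℝ, ℂ) and its L² norm equals 2 √(π|ξ|) · ‖φ‖_{L²}. In particular, the convolution operator with kernel e^{i(x−y)²/(4ξ)} extends to a bounded operator on L²(ℝ, ℂ) of norm 2√(π|ξ|). -/

import Mathlib

open MeasureTheory Complex Filter Set Polynomial FourierTransform
open scoped ENNReal NNReal

noncomputable section


lemma poly_bound (p : Polynomial ℂ) :
    ∃ (k : ℕ) (C : ℝ), 0 ≤ C ∧ ∀ y : ℝ, ‖p.eval (y:ℂ)‖ ≤ C * (1 + ‖y‖) ^ k := by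
  induction p using Polynomial.induction_on' with
  | monomial n a =>
    refine ⟨n, ‖a‖, norm_nonneg _, fun y => ?_⟩
    rw [Polynomial.eval_monomial, norm_mul, norm_pow]
    have h1 : ‖(y:ℂ)‖ ≤ 1 + ‖y‖ := by
      rw [Complex.norm_real]; simp [Real.norm_eq_abs]
    exact mul_le_mul_of_nonneg_left
      (pow_le_pow_left₀ (norm_nonneg _) h1 n) (norm_nonneg a)
  | add p q hp hq =>
    obtain ⟨k₁, C₁, hC₁, h₁⟩ := hp
    obtain ⟨k₂, C₂, hC₂, h₂⟩ := hq
    refine ⟨max k₁ k₂, C₁ + C₂, by linarith, fun y => ?_⟩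
    have hy : (1:ℝ) ≤ 1 + ‖y‖ := by simp [norm_nonneg]
    have hynn : (0:ℝ) ≤ (1 + ‖y‖) ^ (max k₁ k₂) := by positivity
    have e1 : C₁ * (1 + ‖y‖) ^ k₁ ≤ C₁ * (1 + ‖y‖) ^ (max k₁ k₂) :=
      mul_le_mul_of_nonneg_left (pow_le_pow_right₀ hy (le_max_left _ _)) hC₁
    have e2 : C₂ * (1 + ‖y‖) ^ k₂ ≤ C₂ * (1 + ‖y‖) ^ (max k₁ k₂) :=
      mul_le_mul_of_nonneg_left (pow_le_pow_right₀ hy (le_max_right _ _)) hC₂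
    calc ‖(p + q).eval (y:ℂ)‖ ≤ ‖p.eval (y:ℂ)‖ + ‖q.eval (y:ℂ)‖ := by
          rw [Polynomial.eval_add]; exact norm_add_le _ _
      _ ≤ C₁ * (1 + ‖y‖) ^ (max k₁ k₂) + C₂ * (1 + ‖y‖) ^ (max k₁ k₂) :=
          add_le_add ((h₁ y).trans e1) ((h₂ y).trans e2)
      _ = (C₁ + C₂) * (1 + ‖y‖) ^ (max k₁ k₂) := by ring


lemma hasDerivAt_cexp_sq (c : ℂ) (y : ℝ) :
    HasDerivAt (fun y : ℝ => Complex.exp (c * (y:ℂ)^2))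
      (Complex.exp (c * (y:ℂ)^2) * (c * (2*(y:ℂ)))) y := by
  have h0 : HasDerivAt (fun y : ℝ => (y:ℂ)^2) (2*(y:ℂ)) y := by
    simpa using (hasDerivAt_pow 2 (y:ℂ)).comp_ofReal
  have h1 : HasDerivAt (fun y : ℝ => c * (y:ℂ)^2) (c * (2*(y:ℂ))) y := h0.const_mul c
  exact h1.cexp

lemma contDiff_cexp_sq (c : ℂ) (n : WithTop ℕ∞) :
    ContDiff ℝ n (fun y : ℝ => Complex.exp (c * (y:ℂ)^2)) := by
  have : ContDiff ℝ n (fun y : ℝ => c * (y:ℂ)^2) :=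
    contDiff_const.mul (Complex.ofRealCLM.contDiff.pow 2)
  exact this.cexp

lemma iteratedDeriv_cexp_sq (c : ℂ) (n : ℕ) :
    ∃ p : Polynomial ℂ, ∀ y : ℝ,
      iteratedDeriv n (fun y : ℝ => Complex.exp (c * (y:ℂ)^2)) y
        = p.eval (y:ℂ) * Complex.exp (c * (y:ℂ)^2) := by
  induction n with
  | zero => exact ⟨1, fun y => by simp⟩
  | succ n ih =>
    obtain ⟨p, hp⟩ := ih
    refine ⟨derivative p + Polynomial.C (2*c) * X * p, fun y => ?_⟩
    rw [iteratedDeriv_succ, funext hp]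
    have h1 : HasDerivAt (fun y : ℝ => p.eval (y:ℂ)) ((derivative p).eval (y:ℂ)) y :=
      (p.hasDerivAt (y:ℂ)).comp_ofReal
    have h2 := hasDerivAt_cexp_sq c y
    rw [HasDerivAt.deriv (f := fun y : ℝ => p.eval (y:ℂ) * Complex.exp (c * (y:ℂ)^2)) (h1.mul h2)]
    simp [Polynomial.eval_add, Polynomial.eval_mul]
    ring

lemma norm_cexp_sq_of_re_eq_zero {c : ℂ} (hc : c.re = 0) (y : ℝ) :
    ‖Complex.exp (c * (y:ℂ)^2)‖ = 1 := by
  have hre : (c * (y:ℂ)^2).re = 0 := by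
    simp [Complex.mul_re, hc, ← Complex.ofReal_pow]
  rw [Complex.norm_exp, hre, Real.exp_zero]

lemma hasTemperateGrowth_cexp_sq {c : ℂ} (hc : c.re = 0) :
    Function.HasTemperateGrowth (fun y : ℝ => Complex.exp (c * (y:ℂ)^2)) := by
  refine ⟨contDiff_cexp_sq c _, fun n => ?_⟩
  obtain ⟨p, hp⟩ := iteratedDeriv_cexp_sq c n
  obtain ⟨k, C, hC, hbound⟩ := poly_bound p
  refine ⟨k, C, fun y => ?_⟩
  rw [norm_iteratedFDeriv_eq_norm_iteratedDeriv, hp y, norm_mul,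
    norm_cexp_sq_of_re_eq_zero hc, mul_one]
  exact hbound y

-- Schwartz L² helpers
lemma schwartz_integrable_normSq (f : SchwartzMap ℝ ℂ) :
    Integrable (fun x : ℝ => ‖f x‖^2) (volume : Measure ℝ) := by
  obtain ⟨C, hC⟩ : ∃ C, ∀ x : ℝ, ‖f x‖ ≤ C := by
    refine ⟨SchwartzMap.seminorm ℝ 0 0 f, fun x => ?_⟩
    simpa using f.le_seminorm ℝ 0 0 x
  refine (f.integrable.norm.const_mul C).mono' ?_ ?_
  · exact ((f.continuous.norm).pow 2).aestronglyMeasurable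
  · refine Filter.Eventually.of_forall (fun x => ?_)
    have h0 : (0:ℝ) ≤ ‖f x‖ := norm_nonneg _
    have := hC x
    rw [Real.norm_eq_abs, _root_.abs_of_nonneg (by positivity : (0:ℝ) ≤ ‖f x‖^2)]
    calc ‖f x‖^2 = ‖f x‖ * ‖f x‖ := sq ‖f x‖
      _ ≤ C * ‖f x‖ := by
          exact mul_le_mul_of_nonneg_right (hC x) h0

lemma lintegral_sq_eq (f : ℝ → ℂ) (hf : Integrable (fun x => ‖f x‖^2) volume) :
    ∫⁻ x, (‖f x‖₊ : ℝ≥0∞)^2 = ENNReal.ofReal (∫ x, ‖f x‖^2) := by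
  rw [MeasureTheory.ofReal_integral_eq_lintegral_ofReal hf
    (Filter.Eventually.of_forall fun x => by positivity)]
  congr 1
  ext x
  rw [← enorm_eq_nnnorm, ← ofReal_norm]
  rw [← ENNReal.ofReal_pow (norm_nonneg _)]

lemma eLpNorm_two_eq (f : ℝ → ℂ) :
    eLpNorm f 2 (volume : Measure ℝ) = (∫⁻ x, (‖f x‖₊ : ℝ≥0∞)^2) ^ (1/2 : ℝ) := by
  rw [eLpNorm_eq_lintegral_rpow_enorm_toReal two_ne_zero ENNReal.ofNat_ne_top]
  simp only [enorm_eq_nnnorm]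
  norm_num


lemma integrable_conj_comp {f : ℝ → ℂ} (hf : Integrable f volume) :
    Integrable (fun x => (starRingEnd ℂ) (f x)) volume :=
  ((Complex.conjCLE : ℂ ≃L[ℝ] ℂ).toContinuousLinearMap).integrable_comp hf

lemma fourier_conj (f : ℝ → ℂ) (v : ℝ) :
    𝓕 (fun y => (starRingEnd ℂ) (f (-y))) v
      = (starRingEnd ℂ) (𝓕 f v) := by
  rw [Real.fourier_real_eq_integral_exp_smul,
    Real.fourier_real_eq_integral_exp_smul]
  rw [← integral_conj]
  rw [← integral_neg_eq_self]
  congr 1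
  ext y
  rw [smul_eq_mul, smul_eq_mul, map_mul, neg_neg]
  congr 1
  rw [← Complex.exp_conj, map_mul, Complex.conj_I, Complex.conj_ofReal]
  push_cast
  ring_nf

lemma plancherel_schwartz (ψ : SchwartzMap ℝ ℂ) :
    ∫ v, ‖𝓕 (⇑ψ) v‖^2 = ∫ x, ‖ψ x‖^2 := by
  set w := SchwartzMap.fourierTransformCLM ℂ ψ with hwdef
  have hw : ⇑w = 𝓕 ⇑ψ := rfl
  set u : ℝ → ℂ := fun y => (starRingEnd ℂ) (ψ (-y)) with hu
  have hu_cont : Continuous u := Complex.continuous_conj.comp (ψ.continuous.comp continuous_neg)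
  have hu_int : Integrable u volume := integrable_conj_comp (ψ.integrable.comp_neg)
  have key1 : 𝓕 u = fun v => (starRingEnd ℂ) (w v) := by
    ext v
    rw [hw]
    exact fourier_conj ⇑ψ v
  have h𝓕u_int : Integrable (𝓕 u) volume := by
    rw [key1]; exact integrable_conj_comp w.integrable
  have key2 : ∀ x : ℝ, 𝓕 (𝓕 u) x
      = (starRingEnd ℂ) (ψ x) := by
    intro x
    have h1 : 𝓕 (𝓕 u) x
        = 𝓕⁻ (𝓕 u) (-x) := by
      rw [Real.fourierInv_eq_fourier_neg, neg_neg]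
    rw [h1, hu_int.fourierInv_fourier_eq h𝓕u_int (hu_cont.continuousAt)]
    simp [hu]
  -- multiplication formula
  have hLflip : (innerₗ ℝ).flip = innerₗ ℝ := by
    ext x y
    simp [real_inner_comm]
  have hLcont : Continuous fun p : ℝ × ℝ => innerₗ ℝ p.1 p.2 := by
    simpa using (continuous_inner : Continuous fun p : ℝ × ℝ => inner ℝ p.1 p.2)
  have hmul := VectorFourier.integral_fourierIntegral_smul_eq_flip
    (e := Real.fourierChar) (L := innerₗ ℝ) (μ := (volume : Measure ℝ))
    (ν := (volume : Measure ℝ)) Real.continuous_fourierChar hLcont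
    ψ.integrable h𝓕u_int
  rw [hLflip] at hmul
  -- identify with 𝓕
  have hmul' : ∫ v, (𝓕 ⇑ψ v) * (𝓕 u v)
      = ∫ x, ψ x * (𝓕 (𝓕 u) x) := by
    simp only [smul_eq_mul] at hmul; exact hmul
  rw [key1] at hmul'
  have key2' : 𝓕 (fun v => (starRingEnd ℂ) (w v))
      = fun x => (starRingEnd ℂ) (ψ x) := by
    rw [← key1]; funext x; exact key2 x
  rw [key2'] at hmul'
  have hnorm : ∀ z : ℂ, z * (starRingEnd ℂ) z = ((‖z‖^2 : ℝ) : ℂ) := by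
    intro z
    rw [Complex.mul_conj]
    norm_cast
    rw [Complex.normSq_eq_norm_sq]
  have lhs : ∫ v, (𝓕 ⇑ψ v) * ((starRingEnd ℂ) (w v))
      = ((∫ v, ‖𝓕 ⇑ψ v‖^2 : ℝ) : ℂ) := by
    calc ∫ v, (𝓕 ⇑ψ v) * ((starRingEnd ℂ) (w v))
        = ∫ v, ((‖𝓕 ⇑ψ v‖^2 : ℝ) : ℂ) := by
          congr 1; funext v; rw [← hw, hnorm]
      _ = ((∫ v, ‖𝓕 ⇑ψ v‖^2 : ℝ) : ℂ) := integral_ofReal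
  have rhs : ∫ x, ψ x * ((starRingEnd ℂ) (ψ x)) = ((∫ x, ‖ψ x‖^2 : ℝ) : ℂ) := by
    calc ∫ x, ψ x * ((starRingEnd ℂ) (ψ x))
        = ∫ x, ((‖ψ x‖^2 : ℝ) : ℂ) := by congr 1; funext x; rw [hnorm]
      _ = ((∫ x, ‖ψ x‖^2 : ℝ) : ℂ) := integral_ofReal
  rw [lhs, rhs] at hmul'
  exact_mod_cast hmul'


lemma lintegral_comp_div (u : ℝ → ℝ≥0∞) (hu : Measurable u) (a : ℝ) (ha : a ≠ 0) :
    ∫⁻ x, u (x / a) = ENNReal.ofReal |a| * ∫⁻ v, u v := by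
  have h1 : (fun x : ℝ => u (x / a)) = fun x => u (a⁻¹ * x) := by
    funext x; rw [div_eq_inv_mul]
  have h2 : ∫⁻ x, u (a⁻¹ * x) = ∫⁻ y, u y ∂(Measure.map (a⁻¹ * ·) volume) :=
    (lintegral_map hu (measurable_const_mul a⁻¹)).symm
  rw [h1, h2, Real.map_volume_mul_left (inv_ne_zero ha), inv_inv, lintegral_smul_measure, smul_eq_mul]

set_option maxHeartbeats 1000000 in
/-- For every real `ξ ≠ 0` and every Schwartz function `φ`, the
function `x ↦ ∫_ℝ e^{i(x−y)²/(4ξ)} φ(y) dy` belongs to `L²(ℝ, ℂ)` and its `L²` norm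
equals `2√(π|ξ|) · ‖φ‖_{L²}`.  (In particular the convolution operator with kernel
`e^{i(x−y)²/(4ξ)}` extends to a bounded operator on `L²(ℝ, ℂ)` of norm `2√(π|ξ|)`.) -/
theorem fresnel_convolution_L2_norm
    (ξ : ℝ) (hξ : ξ ≠ 0) (φ : SchwartzMap ℝ ℂ) :
    MemLp (fun x : ℝ => ∫ y : ℝ,
        Complex.exp (Complex.I * ((x : ℂ) - (y : ℂ)) ^ 2 / (4 * (ξ : ℂ))) * φ y)
      2 (volume : Measure ℝ) ∧
    eLpNorm (fun x : ℝ => ∫ y : ℝ,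
        Complex.exp (Complex.I * ((x : ℂ) - (y : ℂ)) ^ 2 / (4 * (ξ : ℂ))) * φ y)
      2 (volume : Measure ℝ)
      = ENNReal.ofReal (2 * Real.sqrt (Real.pi * |ξ|)) *
          eLpNorm (⇑φ) 2 (volume : Measure ℝ) := by
  have hπ : (0:ℝ) < Real.pi := Real.pi_pos
  set c : ℂ := (((4*ξ)⁻¹ : ℝ) : ℂ) * Complex.I with hc
  have hcre : c.re = 0 := by simp [hc, Complex.mul_re]
  have hg := hasTemperateGrowth_cexp_sq hcre
  set g : ℝ → ℂ := fun y : ℝ => Complex.exp (c * (y:ℂ)^2) with hgdef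
  set ψ : SchwartzMap ℝ ℂ :=
    SchwartzMap.bilinLeftCLM (ContinuousLinearMap.mul ℝ ℂ) hg φ with hψdef
  have hψ : ∀ y : ℝ, ψ y = φ y * g y := fun y => rfl
  set w : SchwartzMap ℝ ℂ := SchwartzMap.fourierTransformCLM ℂ ψ with hwdef
  have hw : ⇑w = 𝓕 ⇑ψ := rfl
  set a : ℝ := 4 * Real.pi * ξ with ha
  have ha0 : a ≠ 0 := by
    simp only [ha]
    positivity
  have hξC : (ξ:ℂ) ≠ 0 := Complex.ofReal_ne_zero.mpr hξ
  have hπC : ((Real.pi : ℝ) : ℂ) ≠ 0 := Complex.ofReal_ne_zero.mpr hπ.ne'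
  set F : ℝ → ℂ := fun x : ℝ => ∫ y : ℝ,
      Complex.exp (Complex.I * ((x : ℂ) - (y : ℂ)) ^ 2 / (4 * (ξ : ℂ))) * φ y with hFdef
  -- pointwise factorization
  have hF : ∀ x : ℝ, F x = g x * w (x / a) := by
    intro x
    rw [hFdef]
    simp only
    rw [show w (x/a) = 𝓕 (⇑ψ) (x/a) from congrFun hw _,
      Real.fourier_real_eq_integral_exp_smul, ← integral_const_mul]
    congr 1
    funext y
    rw [smul_eq_mul, hψ y]
    have hax : (((-2 * Real.pi * y * (x/a) : ℝ)) : ℂ) * Complex.I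
        = -((x:ℂ) * (y:ℂ) * Complex.I) / (2*(ξ:ℂ)) := by
      rw [ha]
      push_cast
      field_simp
      ring
    have expand : Complex.I * ((x : ℂ) - (y : ℂ)) ^ 2 / (4 * (ξ : ℂ))
        = c * (x:ℂ)^2 + (((-2 * Real.pi * y * (x/a) : ℝ)) * Complex.I + c * (y:ℂ)^2) := by
      rw [hax, hc]
      push_cast
      field_simp
      ring
    rw [expand, Complex.exp_add, Complex.exp_add]
    ring
  have hFfun : F = fun x => g x * w (x / a) := funext hF
  -- norms
  have hgnorm : ∀ x : ℝ, ‖g x‖ = 1 := fun x => norm_cexp_sq_of_re_eq_zero hcre x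
  have hψnorm : ∀ y : ℝ, ‖ψ y‖ = ‖φ y‖ := by
    intro y
    rw [hψ y, norm_mul, hgnorm y, mul_one]
  -- lintegral computation
  have hum : Measurable fun v : ℝ => (‖w v‖₊ : ℝ≥0∞)^2 :=
    (w.continuous.measurable.nnnorm.coe_nnreal_ennreal).pow_const 2
  have hplan : ∫⁻ v, (‖w v‖₊ : ℝ≥0∞)^2 = ∫⁻ v, (‖φ v‖₊ : ℝ≥0∞)^2 := by
    rw [lintegral_sq_eq ⇑w (schwartz_integrable_normSq w),
      lintegral_sq_eq ⇑φ (schwartz_integrable_normSq φ)]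
    congr 1
    have h1 : ∫ v, ‖w v‖^2 = ∫ v, ‖ψ v‖^2 := by
      rw [show (fun v => ‖w v‖^2) = fun v => ‖𝓕 (⇑ψ) v‖^2 by
        funext v; rw [congrFun hw v]]
      exact plancherel_schwartz ψ
    rw [h1, show (fun v => ‖ψ v‖^2) = fun v => ‖φ v‖^2 from
      funext (fun v => by rw [hψnorm v])]
  have hlin : (∫⁻ x : ℝ, (‖F x‖₊ : ℝ≥0∞)^2)
      = ENNReal.ofReal |a| * ∫⁻ v, (‖φ v‖₊ : ℝ≥0∞)^2 := by
    have step1 : (∫⁻ x : ℝ, (‖F x‖₊ : ℝ≥0∞)^2) = ∫⁻ x : ℝ, (‖w (x / a)‖₊ : ℝ≥0∞)^2 := by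
      congr 1
      funext x
      congr 2
      exact NNReal.coe_injective
        (by simp only [coe_nnnorm, hF x, norm_mul, hgnorm x, one_mul])
    rw [step1, lintegral_comp_div _ hum a ha0, hplan]
  -- conclusion
  have habs : |a| = 4 * (Real.pi * |ξ|) := by
    rw [ha, abs_mul, abs_mul]
    rw [abs_of_pos (by norm_num : (0:ℝ) < 4), abs_of_pos hπ]
    ring
  have hsqrt : Real.sqrt |a| = 2 * Real.sqrt (Real.pi * |ξ|) := by
    rw [habs, Real.sqrt_mul (by norm_num : (0:ℝ) ≤ 4),
      show Real.sqrt 4 = 2 by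
        rw [show (4:ℝ) = 2^2 by norm_num, Real.sqrt_sq (by norm_num : (0:ℝ) ≤ 2)]]
  have hofReal : (ENNReal.ofReal |a|) ^ (1/2 : ℝ)
      = ENNReal.ofReal (2 * Real.sqrt (Real.pi * |ξ|)) := by
    rw [← hsqrt, Real.sqrt_eq_rpow]
    exact ENNReal.ofReal_rpow_of_pos (abs_pos.mpr ha0)
  have help : eLpNorm F 2 (volume : Measure ℝ)
      = ENNReal.ofReal (2 * Real.sqrt (Real.pi * |ξ|)) *
          eLpNorm (⇑φ) 2 (volume : Measure ℝ) := by
    rw [eLpNorm_two_eq, eLpNorm_two_eq, hlin,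
      ENNReal.mul_rpow_of_nonneg _ _ (by norm_num : (0:ℝ) ≤ 1/2), hofReal]
  refine ⟨⟨?_, ?_⟩, help⟩
  · have hgc : Continuous g := by
      rw [hgdef]
      exact Complex.continuous_exp.comp
        (continuous_const.mul (Complex.continuous_ofReal.pow 2))
    have hcont : Continuous F := by
      rw [hFfun]
      exact hgc.mul (w.continuous.comp (continuous_id.div_const a))
    exact hcont.aestronglyMeasurable
  · rw [eLpNorm_two_eq, hlin]
    refine ENNReal.rpow_lt_top_of_nonneg (by norm_num) ?_
    refine (ENNReal.mul_lt_top ENNReal.ofReal_lt_top ?_).ne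
    rw [lintegral_sq_eq ⇑φ (schwartz_integrable_normSq φ)]
    exact ENNReal.ofReal_lt_top
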